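/- Let A, B ⊆ ℤ be finite nonempty sets, let q ≥ 1, and let U ⊆ {0, q} with U nonempty. Suppose for each residue r mod q we set A_r := {a ∈ A : a ≡ r (mod q)} and B_s := {b ∈ B : b ≡ s (mod q)}, and let r* maximize |A_r|. Then |A + B + U| ≥ |U| · |A_{r*}|^{1/2} · ∑_{s ∈ ℤ/qℤ} |B_s|^{1/2}. -/

import Mathlib

open scoped Pointwise

open Finset in
lemma fibre_bound (q : ℕ) [NeZero q] (U X Y : Finset ℤ)
    (hU : U ⊆ {0, (q : ℤ)}) (hUne : U.Nonempty) (hX : X.Nonempty) :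
    (U.card : ℝ) * Real.sqrt X.card * Real.sqrt Y.card ≤ ((X + Y + U).card : ℝ) := by
  rcases Y.eq_empty_or_nonempty with rfl | hY
  · simp
  have hq : (0 : ℤ) < (q : ℤ) := by exact_mod_cast Nat.pos_of_ne_zero (NeZero.ne q)
  have hXY : (X.card : ℝ) + Y.card - 1 ≤ ((X + Y).card : ℝ) := by
    have h := cauchy_davenport_add_of_linearOrder_isCancelAdd hX hY
    have h2 : X.card + Y.card ≤ (X + Y).card + 1 := by omega
    have h3 : ((X.card + Y.card : ℕ) : ℝ) ≤ (((X + Y).card + 1 : ℕ) : ℝ) := Nat.cast_le.2 h2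
    push_cast at h3
    linarith
  have hX1 : (1 : ℝ) ≤ X.card := by exact_mod_cast hX.card_pos
  have hY1 : (1 : ℝ) ≤ Y.card := by exact_mod_cast hY.card_pos
  have hsq : Real.sqrt X.card * Real.sqrt Y.card ≤ ((X.card : ℝ) + Y.card) / 2 := by
    rw [← Real.sqrt_mul (by positivity)]
    have : ((X.card : ℝ) * Y.card) ≤ (((X.card : ℝ) + Y.card) / 2) ^ 2 := by nlinarith [sq_nonneg ((X.card : ℝ) - Y.card)]
    calc Real.sqrt ((X.card : ℝ) * Y.card) ≤ Real.sqrt ((((X.card : ℝ) + Y.card) / 2) ^ 2) :=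
          Real.sqrt_le_sqrt this
      _ = ((X.card : ℝ) + Y.card) / 2 := Real.sqrt_sq (by positivity)
  
  have hUcard : U.card ≤ 2 := by
    calc U.card ≤ ({0, (q : ℤ)} : Finset ℤ).card := card_le_card hU
      _ ≤ 2 := card_insert_le _ _ |>.trans (by simp)
  have hU1 : 1 ≤ U.card := hUne.card_pos
  interval_cases hcard : U.card
  · -- U is a singleton
    obtain ⟨u, rfl⟩ := card_eq_one.1 hcard
    have hle : (X + Y).card ≤ (X + Y + {u}).card := by
      apply card_le_card_of_injOn (fun x => x + u)
        (fun x hx => add_mem_add hx (mem_singleton_self u))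
      intro a _ b _ h
      exact add_right_cancel h
    have hle' : ((X + Y).card : ℝ) ≤ ((X + Y + {u}).card : ℝ) := Nat.cast_le.2 hle
    push_cast
    nlinarith [hsq, hXY, hX1, hY1]
  · -- U = {0, q}
    have hUeq : U = {0, (q : ℤ)} := by
      apply eq_of_subset_of_card_le hU
      rw [hcard]
      exact card_insert_le _ _ |>.trans (by simp)
    subst hUeq
    -- |Y + U| ≥ |Y| + 1
    have hmem : Y.max' hY + q ∉ Y := fun h => by
      have := Y.le_max' _ h; omega
    have hYU : Y.card + 1 ≤ (Y + {0, (q : ℤ)}).card := by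
      have hsub : insert (Y.max' hY + q) Y ⊆ Y + {0, (q : ℤ)} := by
        intro x hx
        rcases mem_insert.1 hx with rfl | hx
        · exact add_mem_add (Y.max'_mem hY) (by simp)
        · simpa using add_mem_add hx (mem_insert_self 0 _)
      calc Y.card + 1 = (insert (Y.max' hY + q) Y).card := (card_insert_of_notMem hmem).symm
        _ ≤ _ := card_le_card hsub
    have hYUne : (Y + ({0, (q : ℤ)} : Finset ℤ)).Nonempty := hY.add ⟨0, by simp⟩
    have hXYU : (X.card : ℝ) + Y.card ≤ ((X + Y + {0, (q : ℤ)}).card : ℝ) := by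
      rw [add_assoc]
      have h1 : X.card + (Y + ({0, (q : ℤ)} : Finset ℤ)).card - 1 ≤ (X + (Y + {0, (q : ℤ)})).card :=
        cauchy_davenport_add_of_linearOrder_isCancelAdd hX hYUne
      have := hX.card_pos
      push_cast
      have : X.card + (Y.card + 1) - 1 ≤ (X + (Y + ({0, (q : ℤ)} : Finset ℤ))).card := by omega
      exact_mod_cast by omega
    push_cast
    nlinarith [hsq, hXYU]

open Finset in
theorem sumset_fibre_lower_bound
    (A B : Finset ℤ) (hA : A.Nonempty) (hB : B.Nonempty)
    (q : ℕ) [NeZero q] (U : Finset ℤ)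
    (hU : U ⊆ {0, (q : ℤ)}) (hUne : U.Nonempty)
    (Af Bf : ZMod q → Finset ℤ)
    (hAf : ∀ r, Af r = A.filter fun a : ℤ => ((Int.cast a : ZMod q) = r))
    (hBf : ∀ s, Bf s = B.filter fun b : ℤ => ((Int.cast b : ZMod q) = s))
    (r' : ZMod q) (hr' : ∀ r, (Af r).card ≤ (Af r').card) :
    ((A + B + U).card : ℝ) ≥
      U.card * Real.sqrt ((Af r').card) * ∑ s : ZMod q, Real.sqrt ((Bf s).card) := by
  classical
  have hq : (q : ℤ) ≠ 0 := by exact_mod_cast NeZero.ne q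
  -- Af r' is nonempty
  have hAr' : (Af r').Nonempty := by
    obtain ⟨a, ha⟩ := hA
    have : a ∈ Af ((a : ℤ) : ZMod q) := by rw [hAf]; simp [ha]
    rw [← Finset.card_pos]
    exact lt_of_lt_of_le (Finset.card_pos.2 ⟨a, this⟩) (hr' _)
  set f : ZMod q → Finset ℤ := fun s => Af r' + Bf s + U with hf
  -- each f s is a subset of A + B + U
  have hsub : ∀ s, f s ⊆ A + B + U := by
    intro s x hx
    obtain ⟨y, hy, u, hu, rfl⟩ := Finset.mem_add.1 hx
    obtain ⟨a, ha, b, hb, rfl⟩ := Finset.mem_add.1 hy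
    rw [hAf] at ha; rw [hBf] at hb
    exact add_mem_add (add_mem_add (Finset.mem_of_mem_filter _ ha)
      (Finset.mem_of_mem_filter _ hb)) hu
  -- residue of elements of f s
  have hres : ∀ s, ∀ x ∈ f s, ((x : ℤ) : ZMod q) = r' + s := by
    intro s x hx
    obtain ⟨y, hy, u, hu, rfl⟩ := Finset.mem_add.1 hx
    obtain ⟨a, ha, b, hb, rfl⟩ := Finset.mem_add.1 hy
    rw [hAf] at ha; rw [hBf] at hb
    have ha' := (Finset.mem_filter.1 ha).2
    have hb' := (Finset.mem_filter.1 hb).2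
    have hu' : ((u : ℤ) : ZMod q) = 0 := by
      rcases Finset.mem_insert.1 (hU hu) with rfl | hu2
      · simp
      · rw [Finset.mem_singleton] at hu2; subst hu2
        simp
    push_cast
    rw [ha', hb', hu', add_zero]
  have hdisj : ∀ s ∈ (Finset.univ : Finset (ZMod q)), ∀ t ∈ Finset.univ, s ≠ t →
      Disjoint (f s) (f t) := by
    intro s _ t _ hst
    rw [Finset.disjoint_left]
    intro x hxs hxt
    have := (hres s x hxs).symm.trans (hres t x hxt)
    exact hst (by simpa using this)
  have hcard : ∑ s : ZMod q, (f s).card ≤ (A + B + U).card := by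
    rw [← Finset.card_biUnion hdisj]
    exact Finset.card_le_card (Finset.biUnion_subset.2 fun s _ => hsub s)
  calc ((A + B + U).card : ℝ)
      ≥ ∑ s : ZMod q, ((f s).card : ℝ) := by exact_mod_cast hcard
    _ ≥ ∑ s : ZMod q, (U.card : ℝ) * Real.sqrt ((Af r').card) * Real.sqrt ((Bf s).card) :=
        Finset.sum_le_sum fun s _ => fibre_bound q U (Af r') (Bf s) hU hUne hAr'
    _ = U.card * Real.sqrt ((Af r').card) * ∑ s : ZMod q, Real.sqrt ((Bf s).card) := by
        rw [Finset.mul_sum]
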